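/- Let μ : ℕ → (0,∞), and let g^k_α ≥ 0 be given for integers 1 ≤ k ≤ α (with g^k_α = 0 when k > α or k = 0), and assume g¹_α > 0 for every α ≥ 1. Then the condition [for all k ≥ 1 and α ≥ 1: g^k_{α+k}·μ(α+k)·μ(0) = μ(α)·μ(k)·g^k_k] holds if and only if both: (a) μ(α)/μ(0) = (1/(g¹_α)!)·(μ(1)·g¹_1/μ(0))^α for all α ≥ 1, and (b) g^k_α·(g¹_{α−k})!·(g¹_k)! = (g¹_α)!·g^k_k for all 1 ≤ k ≤ α. -/

import Mathlib

/-- The "factorial" `(g¹_k)! = g¹_k · g¹_{k-1} ⋯ g¹_1`, with `(g¹_0)! = 1`. -/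
def gfact (g1 : ℕ → ℝ) : ℕ → ℝ
  | 0 => 1
  | k + 1 => g1 (k + 1) * gfact g1 k

/-- explicit form of the rates and of the marginal for a
mass-migration zero-range process with product invariant measures.  `g k α`
is the rate at which `k` particles leave a site occupied by `α` particles. -/
theorem stmt4
    (μ : ℕ → ℝ) (hμ : ∀ n : ℕ, 0 < μ n)
    (g : ℕ → ℕ → ℝ) (hgnn : ∀ k α : ℕ, 0 ≤ g k α)
    (hgz : ∀ k α : ℕ, (α < k ∨ k = 0) → g k α = 0)
    (hg1 : ∀ α : ℕ, 1 ≤ α → 0 < g 1 α) :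
    (∀ k α : ℕ, 1 ≤ k → 1 ≤ α →
        g k (α + k) * μ (α + k) * μ 0 = μ α * μ k * g k k)
      ↔ ((∀ α : ℕ, 1 ≤ α →
            μ α / μ 0
              = (1 / gfact (fun n => g 1 n) α) * (μ 1 * g 1 1 / μ 0) ^ α)
        ∧ (∀ k α : ℕ, 1 ≤ k → k ≤ α →
            g k α * (gfact (fun n => g 1 n) (α - k) * gfact (fun n => g 1 n) k)
              = gfact (fun n => g 1 n) α * g k k)) := by
  have hμ0 : μ 0 ≠ 0 := (hμ 0).ne'
  have hFpos : ∀ n, 0 < gfact (fun n => g 1 n) n := by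
    intro n
    induction n with
    | zero => norm_num [gfact]
    | succ n ih =>
      have : gfact (fun n => g 1 n) (n + 1)
          = g 1 (n + 1) * gfact (fun n => g 1 n) n := rfl
      rw [this]
      exact mul_pos (hg1 (n + 1) (by omega)) ih
  have hFne : ∀ n, gfact (fun n => g 1 n) n ≠ 0 := fun n => (hFpos n).ne'
  set F := gfact (fun n => g 1 n) with hFdef
  have hFsucc : ∀ n, F (n + 1) = g 1 (n + 1) * F n := fun n => rfl
  have hF0 : F 0 = 1 := rfl
  set c := μ 1 * g 1 1 / μ 0 with hcdef
  have hc : 0 < c := div_pos (mul_pos (hμ 1) (hg1 1 le_rfl)) (hμ 0)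
  have hcne : c ≠ 0 := hc.ne'
  clear_value c
  constructor
  · intro hC
    -- closed form for μ
    have ha : ∀ n, μ n = μ 0 * c ^ n / F n := by
      intro n
      induction n with
      | zero => simp [hF0]
      | succ n ih =>
        rcases Nat.eq_zero_or_pos n with rfl | hn
        · rw [hFsucc, hF0, hcdef]
          have h1 : g 1 1 ≠ 0 := (hg1 1 le_rfl).ne'
          simp only [zero_add, pow_one]
          field_simp
        · have h := hC 1 n le_rfl hn
          have hg1n : g 1 (n + 1) ≠ 0 := (hg1 (n + 1) (by omega)).ne'
          have hμn1 : μ (n + 1)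
              = μ n * μ 1 * g 1 1 / (g 1 (n + 1) * μ 0) := by
            rw [eq_div_iff (by exact mul_ne_zero hg1n hμ0)]
            linear_combination h
          rw [hμn1, ih, hFsucc, hcdef]
          field_simp
          rw [div_left_inj' (hFne n), pow_succ]
          field_simp
    constructor
    · intro α hα
      rw [ha α, div_div, div_eq_iff (mul_ne_zero (hFne α) hμ0)]
      field_simp
      rw [div_self (hFne α)]
    · intro k α hk hkα
      rcases Nat.eq_or_lt_of_le hkα with rfl | hlt
      · simp [hF0]
        ring
      · obtain ⟨β, rfl⟩ : ∃ β, α = β + k := ⟨α - k, by omega⟩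
        have hβ : 1 ≤ β := by omega
        have h := hC k β hk hβ
        rw [ha (β + k), ha β, ha k] at h
        simp only [Nat.add_sub_cancel]
        have hD : μ 0 * μ 0 * c ^ (β + k) ≠ 0 :=
          mul_ne_zero (mul_ne_zero hμ0 hμ0) (pow_ne_zero _ hcne)
        apply mul_left_cancel₀ hD
        field_simp [hFne] at h
        linear_combination μ 0 ^ 2 * h
  · intro ⟨ha, hb⟩ k α hk hα
    have hμform : ∀ n, μ n = μ 0 * c ^ n / F n := by
      intro n
      rcases Nat.eq_zero_or_pos n with rfl | hn
      · simp [hF0]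
      · have h := ha n hn
        field_simp at h ⊢
        linear_combination h
    have hbb := hb k (α + k) hk (by omega)
    simp only [Nat.add_sub_cancel] at hbb
    rw [hμform (α + k), hμform α, hμform k]
    field_simp [hFne]
    linear_combination c ^ (α + k) * hbb
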